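/- Let Φ be an N×m real matrix whose columns are discretely divergence-free, M Φ = 0, and let a : ℝ → ℝ^m be differentiable with derivative a'(t), p : ℝ → ℝ^P. Suppose a satisfies the projected (Galerkin) momentum equation a'(t) = Φᵀ ( −C̃(Φ a(t)) Φ a(t) + ν D Φ a(t) − G p(t) ) for all t. Then the ROM kinetic energy K_r(t) := ½ ‖a(t)‖² (Euclidean norm) satisfies, at every t, d/dt K_r(t) = −ν ‖Q Φ a(t)‖². In particular the ROM is nonlinearly stable for ν ≥ 0 — the ROM kinetic energy is nonincreasing — independent of the number of modes m, and for ν = 0 it is exactly conserved. -/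

import Mathlib

open Matrix

private lemma aux_transpose_dot {n k : ℕ} (A : Matrix (Fin n) (Fin k) ℝ)
    (w : Fin n → ℝ) (x : Fin k → ℝ) : (Aᵀ *ᵥ w) ⬝ᵥ x = w ⬝ᵥ (A *ᵥ x) := by
  rw [Matrix.mulVec_transpose, ← Matrix.dotProduct_mulVec]

/-- Energy conservation / stability of the velocity-only ROM: with a
divergence-free basis (`M Φ = 0`), skew-symmetric convection, `D = −QᵀQ`,
`G = −Mᵀ`, the ROM kinetic energy `K_r = ½ ‖a‖²` satisfies
`dK_r/dt = −ν ‖Q Φ a‖²`, independent of the number of modes `m`. -/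
theorem rom_energy_equation
    (N P NQ m : ℕ)
    (M : Matrix (Fin P) (Fin N) ℝ) (G : Matrix (Fin N) (Fin P) ℝ) (hG : G = -Mᵀ)
    (C : (Fin N → ℝ) → Matrix (Fin N) (Fin N) ℝ)
    (hC : ∀ w : Fin N → ℝ, (C w)ᵀ = -(C w))
    (Q : Matrix (Fin NQ) (Fin N) ℝ) (D : Matrix (Fin N) (Fin N) ℝ)
    (hD : D = -(Qᵀ * Q))
    (ν : ℝ) (hν : 0 ≤ ν)
    (Φ : Matrix (Fin N) (Fin m) ℝ) (hΦ : M * Φ = 0)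
    (a : ℝ → Fin m → ℝ) (p : ℝ → Fin P → ℝ)
    (ha : ∀ t, HasDerivAt a
      (Φᵀ *ᵥ (-(C (Φ *ᵥ a t) *ᵥ (Φ *ᵥ a t)) + ν • (D *ᵥ (Φ *ᵥ a t)) - G *ᵥ p t)) t) :
    ∀ t, HasDerivAt (fun s => (1/2) * (a s ⬝ᵥ a s))
      (-ν * ((Q *ᵥ (Φ *ᵥ a t)) ⬝ᵥ (Q *ᵥ (Φ *ᵥ a t)))) t := by
  intro t
  set u : Fin N → ℝ := Φ *ᵥ a t with hu
  set v : Fin m → ℝ := Φᵀ *ᵥ (-(C u *ᵥ u) + ν • (D *ᵥ u) - G *ᵥ p t) with hv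
  have hc : ∀ i, HasDerivAt (fun s => a s i) (v i) t := fun i =>
    (hasDerivAt_pi.mp (ha t)) i
  have hsum : HasDerivAt (fun s => ∑ i, a s i * a s i)
      (∑ i, (v i * a t i + a t i * v i)) t :=
    HasDerivAt.fun_sum fun i _ => (hc i).mul (hc i)
  have hd : HasDerivAt (fun s => (1/2) * (a s ⬝ᵥ a s))
      ((1/2) * ∑ i, (v i * a t i + a t i * v i)) t := by
    simpa only [dotProduct] using hsum.const_mul (1/2 : ℝ)
  have hval : (1/2 : ℝ) * ∑ i, (v i * a t i + a t i * v i) = v ⬝ᵥ a t := by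
    simp only [dotProduct]
    rw [Finset.mul_sum]
    congr 1; funext i; ring
  have hva : v ⬝ᵥ a t = -ν * ((Q *ᵥ u) ⬝ᵥ (Q *ᵥ u)) := by
    rw [hv, aux_transpose_dot]
    rw [sub_dotProduct, add_dotProduct, neg_dotProduct,
      smul_dotProduct]
    have h1 : (C u *ᵥ u) ⬝ᵥ (Φ *ᵥ a t) = 0 := by
      have : (C u *ᵥ u) ⬝ᵥ u = ((C u)ᵀ *ᵥ u) ⬝ᵥ u := by
        rw [aux_transpose_dot, dotProduct_comm]
      rw [hC, Matrix.neg_mulVec, neg_dotProduct] at this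
      rw [← hu]
      linarith
    have h2 : (D *ᵥ u) ⬝ᵥ (Φ *ᵥ a t) = -((Q *ᵥ u) ⬝ᵥ (Q *ᵥ u)) := by
      rw [← hu, hD, Matrix.neg_mulVec, neg_dotProduct, ← Matrix.mulVec_mulVec,
        aux_transpose_dot]
    have h3 : (G *ᵥ p t) ⬝ᵥ (Φ *ᵥ a t) = 0 := by
      rw [← hu, hG, Matrix.neg_mulVec, neg_dotProduct, aux_transpose_dot,
        hu, Matrix.mulVec_mulVec, hΦ]
      simp
    rw [h1, h2, h3]
    simp only [smul_eq_mul]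
    ring
  rw [← hva, ← hval]
  exact hd
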